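/- For integers L ≥ 1 and j ≥ 0, let T^{even}_j be the L×L real matrix with entries (T^{even}_j)_{i,i'} = cos(π(i−i')/2)·(i−i')^{2j} and T^{odd}_j the L×L real matrix with entries (T^{odd}_j)_{i,i'} = sin(π(i−i')/2)·(i−i')^{2j+1}. Then the trace norms satisfy ‖T^{even}_j‖_1 ≤ √((4j+2)/(4j+1)) · L^{2j+1} and ‖T^{odd}_j‖_1 ≤ √((4j+4)/(4j+3)) · L^{2j+2}. -/

import Mathlib

/-!
STATEMENT 16: The `L × L` Toeplitz matrices
`(T^even_j)_{i,i'} = cos(π(i−i')/2)(i−i')^{2j}` and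
`(T^odd_j)_{i,i'} = sin(π(i−i')/2)(i−i')^{2j+1}` satisfy the trace-norm bounds
`‖T^even_j‖₁ ≤ √((4j+2)/(4j+1)) L^{2j+1}` and
`‖T^odd_j‖₁ ≤ √((4j+4)/(4j+3)) L^{2j+2}`, where the trace norm of a real
square matrix is the sum of its singular values (square roots of the
eigenvalues of `MᴴM`).
-/

open scoped BigOperators
open Real

/-- `(T^even_j)_{i,i'} = cos(π(i−i')/2)·(i−i')^{2j}`. -/
noncomputable def Teven (L j : ℕ) : Matrix (Fin L) (Fin L) ℝ :=
  Matrix.of fun i i' =>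
    Real.cos (π * ((i - i' : ℤ) : ℝ) / 2) * ((i - i' : ℤ) : ℝ) ^ (2 * j)

/-- `(T^odd_j)_{i,i'} = sin(π(i−i')/2)·(i−i')^{2j+1}`. -/
noncomputable def Todd (L j : ℕ) : Matrix (Fin L) (Fin L) ℝ :=
  Matrix.of fun i i' =>
    Real.sin (π * ((i - i' : ℤ) : ℝ) / 2) * ((i - i' : ℤ) : ℝ) ^ (2 * j + 1)

/-- The trace norm (Schatten 1-norm) of a real square matrix: the sum of its
singular values, i.e. of the square roots of the eigenvalues of `MᴴM`. -/
noncomputable def traceNorm {L : ℕ} (M : Matrix (Fin L) (Fin L) ℝ) : ℝ :=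
  ∑ i, Real.sqrt ((show (M.transpose * M).IsHermitian by simpa using Matrix.isHermitian_conjTranspose_mul_self M).eigenvalues i)

namespace TraceNormAux

open Matrix Finset

lemma sum_eigs_eq_trace {n : ℕ} {A : Matrix (Fin n) (Fin n) ℝ} (hA : A.IsHermitian) :
    ∑ i, hA.eigenvalues i = A.trace := by
  rw [hA.trace_eq_sum_eigenvalues]
  simp

lemma traceNorm_le_sqrt {L : ℕ} (M : Matrix (Fin L) (Fin L) ℝ) (r : ℕ) (hr : M.rank ≤ r) :
    traceNorm M ≤ Real.sqrt (r * (Mᴴ * M).trace) := by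
  classical
  set hH : (M.transpose * M).IsHermitian := (by simpa using Matrix.isHermitian_conjTranspose_mul_self M) with hhH
  have hnn : ∀ i, 0 ≤ hH.eigenvalues i := fun i =>
    (Matrix.posSemidef_conjTranspose_mul_self M).eigenvalues_nonneg i
  have htr : ∑ i, hH.eigenvalues i = (Mᴴ * M).trace := sum_eigs_eq_trace hH
  set s : Finset (Fin L) := Finset.univ.filter fun i => hH.eigenvalues i ≠ 0 with hs
  have hcard : (s.card : ℝ) ≤ r := by
    have h1 : (Mᴴ * M).rank = Fintype.card {i // hH.eigenvalues i ≠ 0} :=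
      hH.rank_eq_card_non_zero_eigs
    have h2 : (Mᴴ * M).rank = M.rank := by
      rw [Matrix.conjTranspose_eq_transpose_of_trivial]
      exact Matrix.rank_transpose_mul_self M
    rw [Fintype.card_subtype] at h1
    have : s.card ≤ r := by rw [hs]; omega
    exact_mod_cast this
  have heq : traceNorm M = ∑ i ∈ s, Real.sqrt (hH.eigenvalues i) := by
    rw [traceNorm]
    refine (Finset.sum_subset (Finset.subset_univ _) ?_).symm
    intro i _ hi
    simp only [hs, Finset.mem_filter, Finset.mem_univ, true_and, not_not] at hi
    rw [hi, Real.sqrt_zero]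
  have hCS : (∑ i ∈ s, Real.sqrt (hH.eigenvalues i)) ^ 2
      ≤ (s.card : ℝ) * ∑ i ∈ s, hH.eigenvalues i := by
    have h := sq_sum_le_card_mul_sum_sq (s := s) (f := fun i => Real.sqrt (hH.eigenvalues i))
    calc (∑ i ∈ s, Real.sqrt (hH.eigenvalues i)) ^ 2
        ≤ (s.card : ℝ) * ∑ i ∈ s, (Real.sqrt (hH.eigenvalues i)) ^ 2 := h
      _ = (s.card : ℝ) * ∑ i ∈ s, hH.eigenvalues i := by
          congr 1; exact Finset.sum_congr rfl fun i _ => Real.sq_sqrt (hnn i)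
  have hsum_le : ∑ i ∈ s, hH.eigenvalues i ≤ (Mᴴ * M).trace := by
    rw [← htr]
    exact Finset.sum_le_sum_of_subset_of_nonneg (Finset.subset_univ _) fun i _ _ => hnn i
  rw [heq]
  have h0 : 0 ≤ ∑ i ∈ s, Real.sqrt (hH.eigenvalues i) :=
    Finset.sum_nonneg fun i _ => Real.sqrt_nonneg _
  rw [← Real.sqrt_sq h0]
  apply Real.sqrt_le_sqrt
  calc (∑ i ∈ s, Real.sqrt (hH.eigenvalues i)) ^ 2
      ≤ (s.card : ℝ) * ∑ i ∈ s, hH.eigenvalues i := hCS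
    _ ≤ (r : ℝ) * (Mᴴ * M).trace := by
        apply mul_le_mul hcard hsum_le (Finset.sum_nonneg fun i _ => hnn i) (by positivity)

lemma pow_succ_diff_ge (q : ℕ) (hq : Odd q) (x : ℝ) (hx : 0 ≤ x) :
    2 * q * x ^ (q - 1) ≤ (x + 1) ^ q - (x - 1) ^ q := by
  have h1 : (x + 1) ^ q = ∑ k ∈ range (q + 1), x ^ k * 1 ^ (q - k) * (q.choose k) :=
    add_pow x 1 q
  have h2 : (x - 1) ^ q = ∑ k ∈ range (q + 1), x ^ k * (-1 : ℝ) ^ (q - k) * (q.choose k) := by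
    rw [sub_eq_add_neg]; exact add_pow x (-1) q
  rw [h1, h2, ← Finset.sum_sub_distrib]
  have hterm : ∀ k ∈ range (q + 1),
      x ^ k * 1 ^ (q - k) * (q.choose k) - x ^ k * (-1 : ℝ) ^ (q - k) * (q.choose k)
        = x ^ k * (q.choose k) * (1 - (-1 : ℝ) ^ (q - k)) := by
    intro k _; ring
  rw [Finset.sum_congr rfl hterm]
  have hq1 : 1 ≤ q := hq.pos
  have hmem : q - 1 ∈ range (q + 1) := by simp
  have hnn : ∀ k ∈ range (q + 1), 0 ≤ x ^ k * (q.choose k) * (1 - (-1 : ℝ) ^ (q - k)) := by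
    intro k _
    have h1 : (-1 : ℝ) ^ (q - k) ≤ 1 := by
      rcases Nat.even_or_odd (q - k) with h | h
      · rw [h.neg_one_pow]
      · rw [h.neg_one_pow]; norm_num
    have h2 : (0:ℝ) ≤ 1 - (-1:ℝ)^(q-k) := by linarith
    positivity
  have hsingle := Finset.single_le_sum hnn hmem
  refine le_trans ?_ hsingle
  have hqk : q - (q - 1) = 1 := by omega
  rw [hqk]
  have hch : (q.choose (q - 1) : ℝ) = q := by
    have : q.choose (q - 1) = q := by
      rw [Nat.choose_symm (by omega)]
      simpa using Nat.choose_one_right q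
    exact_mod_cast this
  rw [hch, pow_one]
  ring_nf
  exact le_refl _

lemma pow_diff_int (q : ℕ) (hq : Odd q) (n : ℤ) :
    2 * q * (n : ℝ) ^ (q - 1) ≤ ((n : ℝ) + 1) ^ q - ((n : ℝ) - 1) ^ q := by
  rcases le_or_gt 0 (n : ℝ) with h | h
  · exact pow_succ_diff_ge q hq _ h
  · have h0 : (0:ℝ) ≤ -(n:ℝ) := by linarith
    have hmain := pow_succ_diff_ge q hq (-(n:ℝ)) h0
    have he : Even (q - 1) := Nat.Odd.sub_odd hq odd_one
    rw [he.neg_pow] at hmain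
    have e1 : (-(n:ℝ) + 1) ^ q = -((n:ℝ) - 1)^q := by
      rw [show (-(n:ℝ) + 1) = -((n:ℝ) - 1) by ring, hq.neg_pow]
    have e2 : (-(n:ℝ) - 1) ^ q = -((n:ℝ) + 1)^q := by
      rw [show (-(n:ℝ) - 1) = -((n:ℝ) + 1) by ring, hq.neg_pow]
    rw [e1, e2] at hmain
    linarith

lemma row_sum_bound (L : ℕ) (hL : 1 ≤ L) (q : ℕ) (hq : Odd q) (i : Fin L) :
    2 * (q:ℝ) * ∑ i' : Fin L, (((i:ℤ) - (i':ℤ) : ℤ) : ℝ) ^ (q - 1) ≤ 2 * (L:ℝ) ^ q := by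
  classical
  set u : ℕ → ℝ := fun k => ((i:ℤ) - k + 1 : ℝ) ^ q with hu
  have hstep : ∀ k : ℕ, 2 * (q:ℝ) * (((i:ℤ) - (k:ℤ) : ℤ) : ℝ) ^ (q - 1) ≤ u k - u (k + 2) := by
    intro k
    have hmain := pow_diff_int q hq ((i:ℤ) - k)
    have e1 : ((((i:ℤ) - k : ℤ)) : ℝ) + 1 = (i:ℤ) - (k:ℝ) + 1 := by push_cast; ring
    have e2 : ((((i:ℤ) - k : ℤ)) : ℝ) - 1 = (i:ℤ) - ((k:ℝ) + 2) + 1 := by push_cast; ring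
    rw [e1, e2] at hmain
    simpa [hu] using hmain
  have hsum : ∑ i' : Fin L, 2 * (q:ℝ) * (((i:ℤ) - (i':ℤ) : ℤ) : ℝ) ^ (q - 1)
      ≤ u 0 + u 1 - u L - u (L + 1) := by
    calc ∑ i' : Fin L, 2 * (q:ℝ) * (((i:ℤ) - (i':ℤ) : ℤ) : ℝ) ^ (q - 1)
        = ∑ k ∈ range L, 2 * (q:ℝ) * (((i:ℤ) - (k:ℤ) : ℤ) : ℝ) ^ (q - 1) := by
          rw [← Fin.sum_univ_eq_sum_range]
      _ ≤ ∑ k ∈ range L, (u k - u (k + 2)) := Finset.sum_le_sum fun k _ => hstep k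
      _ = ∑ k ∈ range L, ((u k - u (k + 1)) + (u (k+1) - u (k + 2))) := by
          apply Finset.sum_congr rfl; intro k _; ring
      _ = (u 0 - u L) + (u 1 - u (L + 1)) := by
          rw [Finset.sum_add_distrib, Finset.sum_range_sub' u L,
            Finset.sum_range_sub' (fun k => u (k+1)) L]
      _ = u 0 + u 1 - u L - u (L + 1) := by ring
  have him : (i : ℕ) ≤ L - 1 := by omega
  set a : ℝ := ((i : ℕ) : ℝ) with ha
  have ha0 : 0 ≤ a := by positivity
  have haL : a ≤ (L:ℝ) - 1 := by
    rw [ha]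
    have hc : ((i:ℕ) : ℝ) ≤ ((L - 1 : ℕ) : ℝ) := by exact_mod_cast him
    rw [Nat.cast_sub hL] at hc; simpa using hc
  have hu0 : u 0 = (a + 1) ^ q := by simp [hu, ha]
  have hu1 : u 1 = a ^ q := by simp [hu, ha]
  have huL : u L = -(((L:ℝ) - 1 - a) ^ q) := by
    simp only [hu]
    rw [show ((i:ℤ) - (L:ℕ) + 1 : ℝ) = -(((L:ℝ) - 1 - a)) by push_cast [ha]; ring]
    rw [hq.neg_pow]
  have huL1 : u (L + 1) = -(((L:ℝ) - a) ^ q) := by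
    simp only [hu]
    rw [show ((i:ℤ) - ((L:ℕ) + 1 : ℕ) + 1 : ℝ) = -(((L:ℝ) - a)) by push_cast [ha]; ring]
    rw [hq.neg_pow]
  have hb1 : (a + 1) ^ q + ((L:ℝ) - 1 - a) ^ q ≤ (L:ℝ) ^ q := by
    have hp := pow_add_pow_le (by linarith : (0:ℝ) ≤ a + 1)
      (by linarith : (0:ℝ) ≤ (L:ℝ) - 1 - a) hq.pos.ne'
    simpa [show a + 1 + ((L:ℝ) - 1 - a) = (L:ℝ) by ring] using hp
  have hb2 : a ^ q + ((L:ℝ) - a) ^ q ≤ (L:ℝ) ^ q := by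
    have hp := pow_add_pow_le ha0 (by linarith : (0:ℝ) ≤ (L:ℝ) - a) hq.pos.ne'
    simpa [show a + ((L:ℝ) - a) = (L:ℝ) by ring] using hp
  calc 2 * (q:ℝ) * ∑ i' : Fin L, (((i:ℤ) - (i':ℤ) : ℤ) : ℝ) ^ (q - 1)
      = ∑ i' : Fin L, 2 * (q:ℝ) * (((i:ℤ) - (i':ℤ) : ℤ) : ℝ) ^ (q - 1) := by
        rw [Finset.mul_sum]
    _ ≤ u 0 + u 1 - u L - u (L+1) := hsum
    _ ≤ 2 * (L:ℝ) ^ q := by rw [hu0, hu1, huL, huL1]; linarith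

lemma trace_conj {L : ℕ} (M : Matrix (Fin L) (Fin L) ℝ) :
    (Mᴴ * M).trace = ∑ i, ∑ k, (M k i) ^ 2 := by
  simp [Matrix.trace, Matrix.mul_apply, Matrix.conjTranspose_apply, Matrix.diag, pow_two]

lemma frob_bound (L : ℕ) (hL : 1 ≤ L) (q : ℕ) (hq : Odd q) (M : Matrix (Fin L) (Fin L) ℝ)
    (hM : ∀ i k : Fin L, (M k i) ^ 2 ≤ (((i:ℤ) - (k:ℤ) : ℤ) : ℝ) ^ (q - 1)) :
    (Mᴴ * M).trace ≤ (L:ℝ) ^ (q + 1) / q := by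
  rw [trace_conj]
  have hq0 : (0:ℝ) < q := by exact_mod_cast hq.pos
  have hrow : ∀ i : Fin L, ∑ k, (M k i) ^ 2 ≤ (L:ℝ) ^ q / q := by
    intro i
    have h1 : ∑ k, (M k i) ^ 2 ≤ ∑ k : Fin L, (((i:ℤ) - (k:ℤ) : ℤ) : ℝ) ^ (q - 1) :=
      Finset.sum_le_sum fun k _ => hM i k
    have h2 := row_sum_bound L hL q hq i
    rw [le_div_iff₀ hq0]
    nlinarith [h1, h2]
  calc ∑ i : Fin L, ∑ k, (M k i) ^ 2 ≤ ∑ _i : Fin L, (L:ℝ) ^ q / q :=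
        Finset.sum_le_sum fun i _ => hrow i
    _ = (L:ℝ) * ((L:ℝ) ^ q / q) := by
        rw [Finset.sum_const, Finset.card_univ, Fintype.card_fin, nsmul_eq_mul]
    _ = (L:ℝ) ^ (q + 1) / q := by rw [pow_succ]; ring

lemma cos_identity (x y : ℝ) (n : ℕ) :
    Real.cos (π * x / 2 - π * y / 2) * (x - y) ^ n =
      ∑ k ∈ range (n + 1),
        ((Real.cos (π * x / 2) * ((n.choose k : ℝ) * x ^ k)) *
          (Real.cos (π * y / 2) * (-y) ^ (n - k)))
      + ∑ k ∈ range (n + 1),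
        ((Real.sin (π * x / 2) * ((n.choose k : ℝ) * x ^ k)) *
          (Real.sin (π * y / 2) * (-y) ^ (n - k))) := by
  have h1 : (x - y) ^ n = ∑ k ∈ range (n + 1), x ^ k * (-y) ^ (n - k) * (n.choose k) := by
    rw [sub_eq_add_neg]; exact add_pow x (-y) n
  rw [Real.cos_sub, h1]
  rw [Finset.sum_congr rfl (fun k _ => show
      (Real.cos (π * x / 2) * ((n.choose k : ℝ) * x ^ k)) * (Real.cos (π * y / 2) * (-y) ^ (n - k))
      = Real.cos (π * x / 2) * Real.cos (π * y / 2) * (x ^ k * (-y) ^ (n - k) * (n.choose k)) by ring)]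
  rw [Finset.sum_congr rfl (fun k _ => show
      (Real.sin (π * x / 2) * ((n.choose k : ℝ) * x ^ k)) * (Real.sin (π * y / 2) * (-y) ^ (n - k))
      = Real.sin (π * x / 2) * Real.sin (π * y / 2) * (x ^ k * (-y) ^ (n - k) * (n.choose k)) by ring)]
  rw [← Finset.mul_sum, ← Finset.mul_sum]
  ring

lemma sin_identity (x y : ℝ) (n : ℕ) :
    Real.sin (π * x / 2 - π * y / 2) * (x - y) ^ n =
      ∑ k ∈ range (n + 1),
        ((Real.sin (π * x / 2) * ((n.choose k : ℝ) * x ^ k)) *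
          (Real.cos (π * y / 2) * (-y) ^ (n - k)))
      + ∑ k ∈ range (n + 1),
        ((Real.cos (π * x / 2) * ((n.choose k : ℝ) * x ^ k)) *
          (-Real.sin (π * y / 2) * (-y) ^ (n - k))) := by
  have h1 : (x - y) ^ n = ∑ k ∈ range (n + 1), x ^ k * (-y) ^ (n - k) * (n.choose k) := by
    rw [sub_eq_add_neg]; exact add_pow x (-y) n
  rw [Real.sin_sub, h1]
  rw [Finset.sum_congr rfl (fun k _ => show
      (Real.sin (π * x / 2) * ((n.choose k : ℝ) * x ^ k)) * (Real.cos (π * y / 2) * (-y) ^ (n - k))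
      = Real.sin (π * x / 2) * Real.cos (π * y / 2) * (x ^ k * (-y) ^ (n - k) * (n.choose k)) by ring)]
  rw [Finset.sum_congr rfl (fun k _ => show
      (Real.cos (π * x / 2) * ((n.choose k : ℝ) * x ^ k)) * (-Real.sin (π * y / 2) * (-y) ^ (n - k))
      = -(Real.cos (π * x / 2) * Real.sin (π * y / 2)) * (x ^ k * (-y) ^ (n - k) * (n.choose k)) by ring)]
  rw [← Finset.mul_sum, ← Finset.mul_sum]
  ring

lemma rank_Teven (L j : ℕ) : (Teven L j).rank ≤ 4 * j + 2 := by
  classical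
  set n := 2 * j with hn
  set A : Matrix (Fin L) (Fin 2 × Fin (n + 1)) ℝ := fun i p =>
    (if p.1 = 0 then Real.cos (π * (i : ℕ) / 2) else Real.sin (π * (i : ℕ) / 2)) *
      ((n.choose p.2 : ℝ) * ((i : ℕ) : ℝ) ^ (p.2 : ℕ)) with hA
  set B : Matrix (Fin 2 × Fin (n + 1)) (Fin L) ℝ := fun p i' =>
    (if p.1 = 0 then Real.cos (π * (i' : ℕ) / 2) else Real.sin (π * (i' : ℕ) / 2)) *
      (-((i' : ℕ) : ℝ)) ^ (n - (p.2 : ℕ)) with hB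
  have hfact : Teven L j = A * B := by
    ext i i'
    rw [Matrix.mul_apply, Fintype.sum_prod_type, Fin.sum_univ_two]
    simp only [hA, hB]
    norm_num
    have hcast : ((i - i' : ℤ) : ℝ) = ((i : ℕ) : ℝ) - ((i' : ℕ) : ℝ) := by push_cast; ring
    have harg : π * ((i - i' : ℤ) : ℝ) / 2
        = π * ((i : ℕ) : ℝ) / 2 - π * ((i' : ℕ) : ℝ) / 2 := by rw [hcast]; ring
    rw [Teven, Matrix.of_apply, harg, hcast]
    rw [cos_identity ((i : ℕ) : ℝ) ((i' : ℕ) : ℝ) n]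
    rw [Fin.sum_univ_eq_sum_range (fun k => (Real.cos (π * (i:ℕ) / 2) *
      ((n.choose k : ℝ) * ((i:ℕ):ℝ) ^ k)) *
      (Real.cos (π * (i':ℕ) / 2) * (-((i':ℕ):ℝ)) ^ (n - k))) (n+1)]
    rw [Fin.sum_univ_eq_sum_range (fun k => (Real.sin (π * (i:ℕ) / 2) *
      ((n.choose k : ℝ) * ((i:ℕ):ℝ) ^ k)) *
      (Real.sin (π * (i':ℕ) / 2) * (-((i':ℕ):ℝ)) ^ (n - k))) (n+1)]
  have h1 : (A * B).rank ≤ A.rank := Matrix.rank_mul_le_left A B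
  have h2 : A.rank ≤ Fintype.card (Fin 2 × Fin (n + 1)) := Matrix.rank_le_card_width A
  have h3 : Fintype.card (Fin 2 × Fin (n + 1)) = 4 * j + 2 := by
    simp [Fintype.card_prod, hn]; omega
  rw [hfact]
  omega

lemma rank_Todd (L j : ℕ) : (Todd L j).rank ≤ 4 * j + 4 := by
  classical
  set n := 2 * j + 1 with hn
  set A : Matrix (Fin L) (Fin 2 × Fin (n + 1)) ℝ := fun i p =>
    (if p.1 = 0 then Real.sin (π * (i : ℕ) / 2) else Real.cos (π * (i : ℕ) / 2)) *
      ((n.choose p.2 : ℝ) * ((i : ℕ) : ℝ) ^ (p.2 : ℕ)) with hA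
  set B : Matrix (Fin 2 × Fin (n + 1)) (Fin L) ℝ := fun p i' =>
    (if p.1 = 0 then Real.cos (π * (i' : ℕ) / 2) else -Real.sin (π * (i' : ℕ) / 2)) *
      (-((i' : ℕ) : ℝ)) ^ (n - (p.2 : ℕ)) with hB
  have hfact : Todd L j = A * B := by
    ext i i'
    rw [Matrix.mul_apply, Fintype.sum_prod_type, Fin.sum_univ_two]
    simp only [hA, hB]
    norm_num
    have hcast : ((i - i' : ℤ) : ℝ) = ((i : ℕ) : ℝ) - ((i' : ℕ) : ℝ) := by push_cast; ring
    have harg : π * ((i - i' : ℤ) : ℝ) / 2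
        = π * ((i : ℕ) : ℝ) / 2 - π * ((i' : ℕ) : ℝ) / 2 := by rw [hcast]; ring
    rw [Todd, Matrix.of_apply, harg, hcast, show 2 * j + 1 = n from hn.symm]
    rw [sin_identity ((i : ℕ) : ℝ) ((i' : ℕ) : ℝ) n]
    rw [Fin.sum_univ_eq_sum_range (fun k => (Real.sin (π * (i:ℕ) / 2) *
      ((n.choose k : ℝ) * ((i:ℕ):ℝ) ^ k)) *
      (Real.cos (π * (i':ℕ) / 2) * (-((i':ℕ):ℝ)) ^ (n - k))) (n+1)]
    rw [Fin.sum_univ_eq_sum_range (fun k => (Real.cos (π * (i:ℕ) / 2) *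
      ((n.choose k : ℝ) * ((i:ℕ):ℝ) ^ k)) *
      (Real.sin (π * (i':ℕ) / 2) * (-((i':ℕ):ℝ)) ^ (n - k))) (n+1)]
    congr 1
    rw [← Finset.sum_neg_distrib]
    apply Finset.sum_congr rfl
    intro k _
    ring
  have h1 : (A * B).rank ≤ A.rank := Matrix.rank_mul_le_left A B
  have h2 : A.rank ≤ Fintype.card (Fin 2 × Fin (n + 1)) := Matrix.rank_le_card_width A
  have h3 : Fintype.card (Fin 2 × Fin (n + 1)) = 4 * j + 4 := by
    simp [Fintype.card_prod, hn]; omega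
  rw [hfact]
  omega

lemma entry_sq_Teven (L j : ℕ) (i k : Fin L) :
    (Teven L j k i) ^ 2 ≤ (((i:ℤ) - (k:ℤ) : ℤ) : ℝ) ^ (4 * j + 1 - 1) := by
  have he : (4 * j + 1 - 1 : ℕ) = 4 * j := by omega
  rw [he]
  have hsym : (((i:ℤ) - (k:ℤ) : ℤ) : ℝ) ^ (4 * j) = (((k:ℤ) - (i:ℤ) : ℤ) : ℝ) ^ (4 * j) := by
    rw [show ((((i:ℤ) - (k:ℤ)) : ℤ) : ℝ) = -((((k:ℤ) - (i:ℤ)) : ℤ) : ℝ) by push_cast; ring]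
    exact Even.neg_pow ⟨2 * j, by ring⟩ _
  rw [hsym]
  set m : ℝ := (((k:ℤ) - (i:ℤ) : ℤ) : ℝ)
  have hT : Teven L j k i = Real.cos (π * m / 2) * m ^ (2 * j) := rfl
  rw [hT]
  have h1 : (Real.cos (π * m / 2) * m ^ (2 * j)) ^ 2
      = Real.cos (π * m / 2) ^ 2 * (m ^ (2 * j)) ^ 2 := by ring
  have h2 : (m ^ (2 * j)) ^ 2 = m ^ (4 * j) := by
    rw [← pow_mul]; congr 1; ring
  have h3 : 0 ≤ m ^ (4 * j) := by
    have : m ^ (4 * j) = (m ^ (2 * j)) ^ 2 := h2.symm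
    rw [this]; positivity
  have h4 : Real.cos (π * m / 2) ^ 2 ≤ 1 := Real.cos_sq_le_one _
  nlinarith [h3, h4, sq_nonneg (m ^ (2 * j))]

lemma entry_sq_Todd (L j : ℕ) (i k : Fin L) :
    (Todd L j k i) ^ 2 ≤ (((i:ℤ) - (k:ℤ) : ℤ) : ℝ) ^ (4 * j + 3 - 1) := by
  have he : (4 * j + 3 - 1 : ℕ) = 4 * j + 2 := by omega
  rw [he]
  have heven : Even (4 * j + 2) := by exact ⟨2 * j + 1, by ring⟩
  have hsym : (((i:ℤ) - (k:ℤ) : ℤ) : ℝ) ^ (4 * j + 2)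
      = (((k:ℤ) - (i:ℤ) : ℤ) : ℝ) ^ (4 * j + 2) := by
    rw [show ((((i:ℤ) - (k:ℤ)) : ℤ) : ℝ) = -((((k:ℤ) - (i:ℤ)) : ℤ) : ℝ) by push_cast; ring]
    exact heven.neg_pow _
  rw [hsym]
  set m : ℝ := (((k:ℤ) - (i:ℤ) : ℤ) : ℝ)
  have hT : Todd L j k i = Real.sin (π * m / 2) * m ^ (2 * j + 1) := rfl
  rw [hT]
  have h2 : (m ^ (2 * j + 1)) ^ 2 = m ^ (4 * j + 2) := by
    rw [← pow_mul]; congr 1; ring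
  have h3 : 0 ≤ m ^ (4 * j + 2) := by rw [← h2]; positivity
  have h4 : Real.sin (π * m / 2) ^ 2 ≤ 1 := Real.sin_sq_le_one _
  nlinarith [h3, h4, sq_nonneg (m ^ (2 * j + 1))]

end TraceNormAux

open TraceNormAux Matrix in
theorem traceNorm_Teven_Todd (L j : ℕ) (hL : 1 ≤ L) :
    traceNorm (Teven L j) ≤
        Real.sqrt ((4 * j + 2) / (4 * j + 1)) * (L : ℝ) ^ (2 * j + 1) ∧
      traceNorm (Todd L j) ≤
        Real.sqrt ((4 * j + 4) / (4 * j + 3)) * (L : ℝ) ^ (2 * j + 2) := by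
  have hL0 : (0:ℝ) ≤ (L:ℝ) := by positivity
  constructor
  · have hq : Odd (4 * j + 1) := ⟨2 * j, by ring⟩
    have h1 := traceNorm_le_sqrt (Teven L j) (4 * j + 2) (rank_Teven L j)
    have h2 := frob_bound L hL (4 * j + 1) hq (Teven L j) (entry_sq_Teven L j)
    have htrnn : 0 ≤ ((Teven L j)ᴴ * Teven L j).trace := by
      rw [trace_conj]
      exact Finset.sum_nonneg fun i _ => Finset.sum_nonneg fun k _ => sq_nonneg _
    refine h1.trans ?_
    have h3 : ((4 * j + 2 : ℕ) : ℝ) * ((Teven L j)ᴴ * Teven L j).trace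
        ≤ ((4 * j + 2 : ℕ) : ℝ) * ((L:ℝ) ^ (4 * j + 1 + 1) / ((4 * j + 1 : ℕ) : ℝ)) :=
      mul_le_mul_of_nonneg_left h2 (by positivity)
    refine (Real.sqrt_le_sqrt h3).trans ?_
    have he : ((4 * j + 2 : ℕ) : ℝ) * ((L:ℝ) ^ (4 * j + 1 + 1) / ((4 * j + 1 : ℕ) : ℝ))
        = ((4 * (j:ℝ) + 2) / (4 * (j:ℝ) + 1)) * ((L:ℝ) ^ (2 * j + 1)) ^ 2 := by
      rw [← pow_mul]
      push_cast
      rw [show (2 * j + 1) * 2 = 4 * j + 1 + 1 by ring]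
      field_simp
      try ring
    rw [he, Real.sqrt_mul (by positivity), Real.sqrt_sq (by positivity)]
  · have hq : Odd (4 * j + 3) := ⟨2 * j + 1, by ring⟩
    have h1 := traceNorm_le_sqrt (Todd L j) (4 * j + 4) (rank_Todd L j)
    have h2 := frob_bound L hL (4 * j + 3) hq (Todd L j) (entry_sq_Todd L j)
    refine h1.trans ?_
    have h3 : ((4 * j + 4 : ℕ) : ℝ) * ((Todd L j)ᴴ * Todd L j).trace
        ≤ ((4 * j + 4 : ℕ) : ℝ) * ((L:ℝ) ^ (4 * j + 3 + 1) / ((4 * j + 3 : ℕ) : ℝ)) :=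
      mul_le_mul_of_nonneg_left h2 (by positivity)
    refine (Real.sqrt_le_sqrt h3).trans ?_
    have he : ((4 * j + 4 : ℕ) : ℝ) * ((L:ℝ) ^ (4 * j + 3 + 1) / ((4 * j + 3 : ℕ) : ℝ))
        = ((4 * (j:ℝ) + 4) / (4 * (j:ℝ) + 3)) * ((L:ℝ) ^ (2 * j + 2)) ^ 2 := by
      rw [← pow_mul]
      push_cast
      rw [show (2 * j + 2) * 2 = 4 * j + 3 + 1 by ring]
      field_simp
      try ring
    rw [he, Real.sqrt_mul (by positivity), Real.sqrt_sq (by positivity)]
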